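/- Let A, B, B', C, C' be complex-valued multiplicative characters of a finite field F_q with q elements and let x ∈ F_q with x ≠ 1. Then F₂(A;B,B';C,C';x,1-x) = (CB'C')(-1)·Ā(1-x)·₃F₂(A, B̄C, AC̄'; C, AB'C̄' | -x/(1-x)). -/

import Mathlib

open Finset

noncomputable instance {F : Type*} [Field F] [Fintype F] : Fintype (MulChar F ℂ) :=
  Fintype.ofFinite _

/-- Finite-field binomial coefficient `{A choose B} = B(-1) · J(A, B̄)`,
where `J(χ,λ) = ∑_u χ(u)·λ(1-u)` is the Jacobi sum. -/
noncomputable def binom {F : Type*} [Field F] [Fintype F] (A B : MulChar F ℂ) : ℂ :=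
  B (-1) * ∑ u : F, A u * B⁻¹ (1 - u)

/-- Finite-field Gauss hypergeometric series
`₂F₁(A,B;C|x) = ε(x)·(BC)(-1)·∑_y B(y)·(B̄C)(1-y)·Ā(1-xy)`. -/
noncomputable def gauss2F1 {F : Type*} [Field F] [Fintype F]
    (A B C : MulChar F ℂ) (x : F) : ℂ :=
  (1 : MulChar F ℂ) x * (B * C) (-1) *
    ∑ y : F, B y * (B⁻¹ * C) (1 - y) * A⁻¹ (1 - x * y)

/-- Finite-field `₃F₂` hypergeometric series. -/
noncomputable def hyper3F2 {F : Type*} [Field F] [Fintype F]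
    (A₀ A₁ A₂ B₁ B₂ : MulChar F ℂ) (x : F) : ℂ :=
  ((Fintype.card F : ℂ) - 1)⁻¹ *
    ∑ χ : MulChar F ℂ,
      binom (A₀ * χ) χ * binom (A₁ * χ) (B₁ * χ) * binom (A₂ * χ) (B₂ * χ) * χ x

/-- Finite-field Appell series
`F₂(A;B,B';C,C';x,y) = ε(xy)·(BB'CC')(-1)·∑_{u,v} B(u)B'(v)(B̄C)(1-u)(B̄'C')(1-v)·Ā(1-ux-vy)`. -/
noncomputable def appellF2 {F : Type*} [Field F] [Fintype F]
    (A B B' C C' : MulChar F ℂ) (x y : F) : ℂ :=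
  (1 : MulChar F ℂ) (x * y) * (B * B' * C * C') (-1) *
    ∑ u : F, ∑ v : F,
      B u * B' v * (B⁻¹ * C) (1 - u) * (B'⁻¹ * C') (1 - v) * A⁻¹ (1 - u * x - v * y)

open scoped Classical in
/-- `δ(x) = 1` if `x = 0`, and `0` otherwise. -/
noncomputable def deltaF {F : Type*} [Field F] (x : F) : ℂ :=
  if x = 0 then 1 else 0

open scoped Classical in
/-- `δ(χ) = 1` if `χ = ε` (the trivial character), and `0` otherwise. -/
noncomputable def deltaChar {F : Type*} [Field F] [Fintype F] (χ : MulChar F ℂ) : ℂ :=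
  if χ = 1 then 1 else 0

namespace AppellAux

variable {F : Type*} [Field F] [Fintype F]

/-- Möbius map z ↦ z/(z-1). -/
def m (z : F) : F := z * (z - 1)⁻¹

lemma m_zero : m (0 : F) = 0 := by simp [m]
lemma m_one : m (1 : F) = 0 := by simp [m]

lemma m_ne_zero {v : F} (h0 : v ≠ 0) (h1 : v ≠ 1) : m v ≠ 0 := by
  have := sub_ne_zero.mpr h1
  simp [m, h0, this]

lemma m_ne_one (v : F) : m v ≠ 1 := by
  rcases eq_or_ne v 1 with rfl | h1
  · simp [m_one]
  · have hv1 : v - 1 ≠ 0 := sub_ne_zero.mpr h1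
    intro h
    rw [m] at h
    have h2 : v = v - 1 := by
      field_simp at h
      linear_combination h
    have : (0:F) = -1 := by linear_combination h2
    simp at this

lemma m_invol {v : F} (h0 : v ≠ 0) (h1 : v ≠ 1) : m (m v) = v := by
  have hv1 : v - 1 ≠ 0 := sub_ne_zero.mpr h1
  have h2 : m v - 1 = (v - 1)⁻¹ := by simp only [m]; field_simp; ring
  rw [m, h2, m]
  field_simp

lemma chi_m (χ : MulChar F ℂ) (u : F) :
    χ (-1) * (χ u * χ⁻¹ (1 - u)) = χ (m u) := by
  rw [MulChar.inv_apply', ← map_mul, ← map_mul]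
  congr 1
  rcases eq_or_ne u 1 with rfl | h
  · simp [m]
  · have hv1 : u - 1 ≠ 0 := sub_ne_zero.mpr h
    have hv1' : (1:F) - u ≠ 0 := fun h' => hv1 (by linear_combination -h')
    rw [m]
    field_simp
    ring


lemma binom_expand0 (X χ : MulChar F ℂ) :
    binom (X * χ) χ = ∑ u : F, X u * χ (m u) := by
  rw [binom, Finset.mul_sum]
  refine Finset.sum_congr rfl fun u _ => ?_
  rw [MulChar.mul_apply]
  rw [← chi_m χ u]
  ring

lemma binom_expand (X Y χ : MulChar F ℂ) :
    binom (X * χ) (Y * χ) = Y (-1) * ∑ w : F, (X w * Y⁻¹ (1 - w)) * χ (m w) := by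
  rw [binom, Finset.mul_sum, Finset.mul_sum]
  refine Finset.sum_congr rfl fun w _ => ?_
  rw [MulChar.mul_apply, mul_inv, MulChar.mul_apply, MulChar.mul_apply, ← chi_m χ w]
  ring

-- fragment to append inside namespace (tested standalone via t4)
open scoped Classical in
lemma sum_chars (a : F) :
    ∑ χ : MulChar F ℂ, χ a = if a = 1 then ((Fintype.card F : ℂ) - 1) else 0 := by
  rcases eq_or_ne a 1 with rfl | ha
  · simp only [if_pos rfl, map_one, Finset.sum_const, card_univ, nsmul_eq_mul, mul_one]
    have h2 : Nat.card (MulChar F ℂ) = Nat.card Fˣ :=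
      MulChar.card_eq_card_units_of_hasEnoughRootsOfUnity F ℂ
    rw [Nat.card_units, Nat.card_eq_fintype_card] at h2
    rw [h2, Nat.card_eq_fintype_card]
    have h1 : (1 : ℕ) ≤ Fintype.card F := Fintype.card_pos
    push_cast [Nat.cast_sub h1]
    ring
  · rw [if_neg ha]
    rcases eq_or_ne a 0 with rfl | ha0
    · simp [MulChar.map_zero]
    · obtain ⟨χ₀, hχ₀⟩ := MulChar.exists_apply_ne_one_of_hasEnoughRootsOfUnity F ℂ ha
      have key : ∑ χ : MulChar F ℂ, χ a = χ₀ a * ∑ χ : MulChar F ℂ, χ a := by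
        rw [Finset.mul_sum]
        exact (Fintype.sum_equiv (Equiv.mulLeft χ₀) _ _ (fun χ => by
          simp [MulChar.mul_apply])).symm
      have h0 : (χ₀ a - 1) * ∑ χ : MulChar F ℂ, χ a = 0 := by
        rw [sub_mul, one_mul, ← key, sub_self]
      rcases mul_eq_zero.mp h0 with h | h
      · exact absurd (by linear_combination h) hχ₀
      · exact h

lemma card_sub_one_ne : ((Fintype.card F : ℂ) - 1) ≠ 0 := by
  have h : 1 < Fintype.card F := Fintype.one_lt_card
  intro hc
  rw [sub_eq_zero] at hc
  exact_mod_cast h.ne' (by exact_mod_cast hc)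

open scoped Classical in
lemma hyper_eq (A₀ A₁ A₂ B₁ B₂ : MulChar F ℂ) (t : F) :
    hyper3F2 A₀ A₁ A₂ B₁ B₂ t
      = B₁ (-1) * B₂ (-1) * ∑ u : F, ∑ v : F, ∑ w : F,
          (if m u * (m v * t) * m w = 1 then
            A₀ u * (A₁ v * B₁⁻¹ (1 - v)) * (A₂ w * B₂⁻¹ (1 - w)) else 0) := by
  have hp : ∀ χ : MulChar F ℂ,
      binom (A₀ * χ) χ * binom (A₁ * χ) (B₁ * χ) * binom (A₂ * χ) (B₂ * χ) * χ t
        = B₁ (-1) * B₂ (-1) * ∑ u : F, ∑ v : F, ∑ w : F,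
            (A₀ u * (A₁ v * B₁⁻¹ (1 - v)) * (A₂ w * B₂⁻¹ (1 - w)))
              * χ (m u * (m v * t) * m w) := by
    intro χ
    rw [binom_expand0, binom_expand, binom_expand]
    rw [show (∑ u : F, A₀ u * χ (m u)) * (B₁ (-1) * ∑ v : F, (A₁ v * B₁⁻¹ (1 - v)) * χ (m v))
          * (B₂ (-1) * ∑ w : F, (A₂ w * B₂⁻¹ (1 - w)) * χ (m w)) * χ t
        = B₁ (-1) * B₂ (-1) *
          ((∑ u : F, A₀ u * χ (m u)) * ((∑ v : F, (A₁ v * B₁⁻¹ (1 - v)) * χ (m v))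
            * ((∑ w : F, (A₂ w * B₂⁻¹ (1 - w)) * χ (m w)) * χ t))) from by ring]
    congr 1
    rw [Finset.sum_mul]
    refine Finset.sum_congr rfl fun u _ => ?_
    simp only [Finset.mul_sum, Finset.sum_mul]
    rw [Finset.sum_comm]
    refine Finset.sum_congr rfl fun v _ => ?_
    refine Finset.sum_congr rfl fun w _ => ?_
    rw [map_mul, map_mul, map_mul]
    ring
  have key : ∑ χ : MulChar F ℂ, ∑ u : F, ∑ v : F, ∑ w : F,
        (A₀ u * (A₁ v * B₁⁻¹ (1 - v)) * (A₂ w * B₂⁻¹ (1 - w)))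
          * χ (m u * (m v * t) * m w)
      = ∑ u : F, ∑ v : F, ∑ w : F,
        (A₀ u * (A₁ v * B₁⁻¹ (1 - v)) * (A₂ w * B₂⁻¹ (1 - w)))
          * (if m u * (m v * t) * m w = 1 then ((Fintype.card F : ℂ) - 1) else 0) := by
    rw [Finset.sum_comm]
    refine Finset.sum_congr rfl fun u _ => ?_
    rw [Finset.sum_comm]
    refine Finset.sum_congr rfl fun v _ => ?_
    rw [Finset.sum_comm]
    refine Finset.sum_congr rfl fun w _ => ?_
    rw [← Finset.mul_sum, sum_chars]
  rw [hyper3F2, Finset.sum_congr rfl fun χ _ => hp χ, ← Finset.mul_sum, key]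
  rw [show ((Fintype.card F : ℂ) - 1)⁻¹ * (B₁ (-1) * B₂ (-1) * ∑ u : F, ∑ v : F, ∑ w : F,
        (A₀ u * (A₁ v * B₁⁻¹ (1 - v)) * (A₂ w * B₂⁻¹ (1 - w)))
          * (if m u * (m v * t) * m w = 1 then ((Fintype.card F : ℂ) - 1) else 0))
      = B₁ (-1) * B₂ (-1) * (((Fintype.card F : ℂ) - 1)⁻¹ * ∑ u : F, ∑ v : F, ∑ w : F,
        (A₀ u * (A₁ v * B₁⁻¹ (1 - v)) * (A₂ w * B₂⁻¹ (1 - w)))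
          * (if m u * (m v * t) * m w = 1 then ((Fintype.card F : ℂ) - 1) else 0)) from by ring]
  congr 1
  rw [Finset.mul_sum]
  refine Finset.sum_congr rfl fun u _ => ?_
  rw [Finset.mul_sum]
  refine Finset.sum_congr rfl fun v _ => ?_
  rw [Finset.mul_sum]
  refine Finset.sum_congr rfl fun w _ => ?_
  split
  · rw [mul_comm, mul_assoc, mul_inv_cancel₀ card_sub_one_ne, mul_one]
  · ring

open scoped Classical in
lemma w_elim (A₂ B₂ : MulChar F ℂ) (s : F) :
    B₂ (-1) * ∑ w : F, (if s * m w = 1 then A₂ w * B₂⁻¹ (1 - w) else 0)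
      = (A₂⁻¹ * B₂) (1 - s) * B₂⁻¹ s := by
  rcases eq_or_ne s 0 with rfl | hs0
  · simp [MulChar.map_zero]
  rcases eq_or_ne s 1 with rfl | hs1
  · have hni : ∀ w : F, ¬ ((1:F) * m w = 1) := fun w h => m_ne_one w (by rwa [one_mul] at h)
    simp only [hni, if_false, Finset.sum_const_zero, mul_zero]
    rw [sub_self, MulChar.map_zero, zero_mul]
  · have h1s : (1:F) - s ≠ 0 := sub_ne_zero.mpr (Ne.symm hs1)
    have hw : ∀ w : F, (s * m w = 1) ↔ w = (1 - s)⁻¹ := by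
      intro w
      constructor
      · intro h
        rcases eq_or_ne w 1 with rfl | hw1
        · rw [m_one, mul_zero] at h; exact absurd h zero_ne_one
        · have hw1' : w - 1 ≠ 0 := sub_ne_zero.mpr hw1
          rw [m] at h
          have h2 : s * w = w - 1 := by
            field_simp at h
            linear_combination h
          exact eq_inv_of_mul_eq_one_left (by linear_combination -h2)
      · rintro rfl
        rw [m]
        have h2 : (1 - s)⁻¹ - 1 = s * (1-s)⁻¹ := by field_simp; ring
        rw [h2]
        field_simp
    simp only [hw]
    rw [Finset.sum_ite_eq' univ ((1:F) - s)⁻¹ (fun w => A₂ w * B₂⁻¹ (1 - w)),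
      if_pos (Finset.mem_univ _)]
    rw [MulChar.mul_apply, MulChar.inv_apply' A₂, MulChar.inv_apply' B₂, MulChar.inv_apply' B₂]
    rw [show B₂ (-1) * (A₂ ((1:F) - s)⁻¹ * B₂ (1 - ((1:F) - s)⁻¹)⁻¹)
        = A₂ ((1:F)-s)⁻¹ * (B₂ (-1) * B₂ (1 - ((1:F) - s)⁻¹)⁻¹) from by ring]
    rw [← map_mul B₂, mul_assoc, ← map_mul B₂]
    congr 1
    field_simp
    ring

open scoped Classical in
lemma u_elim (A Z W : MulChar F ℂ) {d : F} (hd : d ≠ 0) :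
    ∑ u : F, A u * (W (1 - m u * d) * (A⁻¹ * Z) (m u * d))
      = ∑ b : F, W (1 - b) * Z b * A⁻¹ (b - d) := by
  conv_lhs => rw [← Finset.sum_filter_of_ne (p := fun u : F => u ≠ 0 ∧ u ≠ 1)
    (fun u _ hf => by
      constructor
      · rintro rfl; exact hf (by simp [MulChar.map_zero])
      · rintro rfl; exact hf (by simp [m_one, MulChar.map_zero]))]
  conv_rhs => rw [← Finset.sum_filter_of_ne (p := fun b : F => b ≠ 0 ∧ b ≠ d)
    (fun b _ hf => by
      constructor
      · rintro rfl
        exact hf (by simp [MulChar.map_zero])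
      · rintro rfl; exact hf (by simp [MulChar.map_zero]))]
  refine Finset.sum_nbij' (fun u => m u * d) (fun b => b * (b - d)⁻¹) ?_ ?_ ?_ ?_ ?_
  · intro u hu
    simp only [Finset.mem_filter, Finset.mem_univ, true_and] at hu ⊢
    obtain ⟨h0, h1⟩ := hu
    refine ⟨mul_ne_zero (m_ne_zero h0 h1) hd, fun h => ?_⟩
    exact m_ne_one u (mul_right_cancel₀ hd (h.trans (one_mul d).symm))
  · intro b hb
    simp only [Finset.mem_filter, Finset.mem_univ, true_and] at hb ⊢
    obtain ⟨h0, hbd⟩ := hb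
    have hbd' : b - d ≠ 0 := sub_ne_zero.mpr hbd
    refine ⟨mul_ne_zero h0 (inv_ne_zero hbd'), fun h => ?_⟩
    apply hd
    have h2 : b = b - d := by
      field_simp at h
      linear_combination h
    linear_combination h2
  · intro u hu
    simp only [Finset.mem_filter, Finset.mem_univ, true_and] at hu
    obtain ⟨h0, h1⟩ := hu
    have hu1 : u - 1 ≠ 0 := sub_ne_zero.mpr h1
    simp only [m]
    have h2 : u * (u - 1)⁻¹ * d - d = d * (u - 1)⁻¹ := by field_simp; ring
    rw [h2]
    field_simp
  · intro b hb
    simp only [Finset.mem_filter, Finset.mem_univ, true_and] at hb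
    obtain ⟨h0, hbd⟩ := hb
    have hbd' : b - d ≠ 0 := sub_ne_zero.mpr hbd
    simp only [m]
    have h2 : b * (b - d)⁻¹ - 1 = d * (b - d)⁻¹ := by field_simp; ring
    rw [h2]
    field_simp
  · intro u hu
    simp only [Finset.mem_filter, Finset.mem_univ, true_and] at hu
    obtain ⟨h0, h1⟩ := hu
    have hu1 : u - 1 ≠ 0 := sub_ne_zero.mpr h1
    rw [MulChar.mul_apply, MulChar.inv_apply' A, MulChar.inv_apply' A]
    rw [show A u * (W (1 - m u * d) * (A (m u * d)⁻¹ * Z (m u * d)))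
        = W (1 - m u * d) * Z (m u * d) * (A u * A (m u * d)⁻¹) from by ring]
    rw [← map_mul A]
    have harg : u * (m u * d)⁻¹ = (m u * d - d)⁻¹ := by
      simp only [m]
      have h2 : u * (u - 1)⁻¹ * d - d = d * (u - 1)⁻¹ := by field_simp; ring
      rw [h2]
      field_simp
    rw [harg]

lemma PW1 (B C : MulChar F ℂ) {a : F} (h0 : a ≠ 0) (h1 : a ≠ 1) :
    (B⁻¹ * C) a * B (1 - a) = (B * C) (-1) * ((B⁻¹ * C) (m a) * C⁻¹ (1 - m a)) := by
  have h1a : a - 1 ≠ 0 := sub_ne_zero.mpr h1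
  have h1a' : (1:F) - a ≠ 0 := fun h => h1a (by linear_combination -h)
  have hma : 1 - m a = -(a-1)⁻¹ := by
    simp only [m]
    field_simp
    ring
  rw [hma]
  simp only [MulChar.mul_apply, MulChar.inv_apply' B, MulChar.inv_apply' C, m]
  rw [show B a⁻¹ * C a * B (1-a) = (B a⁻¹ * B (1-a)) * C a from by ring, ← map_mul B]
  rw [show B (-1) * C (-1) * (B (a*(a-1)⁻¹)⁻¹ * C (a*(a-1)⁻¹) * C (-(a-1)⁻¹)⁻¹)
      = (B (-1) * B (a*(a-1)⁻¹)⁻¹) * ((C (-1) * C (a*(a-1)⁻¹)) * C (-(a-1)⁻¹)⁻¹) from by ring,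
    ← map_mul B, ← map_mul C, ← map_mul C]
  congr 1
  · congr 1
    field_simp
    ring
  · congr 1
    field_simp

open scoped Classical in
lemma a_reindex (B C : MulChar F ℂ) (f : F → ℂ) :
    ∑ a : F, (B⁻¹ * C) a * B (1 - a) * f a
      = (B * C) (-1) * ∑ v : F, (B⁻¹ * C) v * C⁻¹ (1 - v) * f (m v) := by
  rw [Finset.mul_sum]
  conv_lhs => rw [← Finset.sum_filter_of_ne (p := fun a : F => a ≠ 0 ∧ a ≠ 1)
    (fun a _ hf => by
      constructor
      · rintro rfl; exact hf (by simp [MulChar.map_zero])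
      · rintro rfl; exact hf (by simp [MulChar.map_zero]))]
  conv_rhs => rw [← Finset.sum_filter_of_ne (p := fun v : F => v ≠ 0 ∧ v ≠ 1)
    (fun v _ hf => by
      constructor
      · rintro rfl; exact hf (by simp [MulChar.map_zero])
      · rintro rfl; exact hf (by simp [MulChar.map_zero]))]
  refine Finset.sum_nbij' m m ?_ ?_ ?_ ?_ ?_
  · intro a ha
    simp only [Finset.mem_filter, Finset.mem_univ, true_and] at ha ⊢
    exact ⟨m_ne_zero ha.1 ha.2, m_ne_one a⟩
  · intro v hv
    simp only [Finset.mem_filter, Finset.mem_univ, true_and] at hv ⊢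
    exact ⟨m_ne_zero hv.1 hv.2, m_ne_one v⟩
  · intro a ha
    simp only [Finset.mem_filter, Finset.mem_univ, true_and] at ha
    exact m_invol ha.1 ha.2
  · intro v hv
    simp only [Finset.mem_filter, Finset.mem_univ, true_and] at hv
    exact m_invol hv.1 hv.2
  · intro a ha
    simp only [Finset.mem_filter, Finset.mem_univ, true_and] at ha
    rw [m_invol ha.1 ha.2, PW1 B C ha.1 ha.2]
    ring

lemma sum_one_sub (f : F → ℂ) : ∑ a : F, f (1 - a) = ∑ a : F, f a :=
  Fintype.sum_equiv (Equiv.subLeft 1) _ _ (fun a => rfl)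

end AppellAux

open AppellAux in
open scoped Classical in
/-- F₂ evaluated on the line `x + y = 1` reduces to a ₃F₂, `x ≠ 1`. -/
theorem appellF2_line {F : Type*} [Field F] [Fintype F]
    (A B B' C C' : MulChar F ℂ) (x : F) (hx : x ≠ 1) :
    appellF2 A B B' C C' x (1 - x) =
      (C * B' * C') (-1) * A⁻¹ (1 - x) *
        hyper3F2 A (B⁻¹ * C) (A * C'⁻¹) C (A * B' * C'⁻¹) (-x / (1 - x)) := by
  classical
  rcases eq_or_ne x 0 with rfl | hx0
  · simp [appellF2, hyper3F2, MulChar.map_zero]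
  have hx1 : (1 : F) - x ≠ 0 := fun h => hx (by linear_combination -h)
  set t : F := -x / (1 - x) with hts
  have ht : t ≠ 0 := div_ne_zero (neg_ne_zero.mpr hx0) hx1
  have hsq : ∀ (χ : MulChar F ℂ), χ (-1) * χ (-1) = 1 := fun χ => by
    rw [← map_mul, neg_mul_neg, one_mul, MulChar.map_one]
  -- canonical double sum
  set S : ℂ := ∑ v : F, ∑ b : F, ((B⁻¹*C) v * C⁻¹ (1 - v)) *
      (B' (1 - b) * ((B'⁻¹ * C') b * A⁻¹ (b - m v * t))) with hS
  -- ===================== R chain =====================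
  have e1 : ((A*C'⁻¹)⁻¹ * (A*B'*C'⁻¹) : MulChar F ℂ) = B' := by
    rw [mul_inv, inv_inv]
    rw [show ((A⁻¹ * C') * (A*B'*C'⁻¹) : MulChar F ℂ)
        = (A⁻¹ * A) * ((C' * C'⁻¹) * B') from by ac_rfl]
    rw [inv_mul_cancel, one_mul, mul_inv_cancel, one_mul]
  have e2 : ((A*B'*C'⁻¹)⁻¹ : MulChar F ℂ) = A⁻¹ * (B'⁻¹ * C') := by
    rw [mul_inv, mul_inv, inv_inv, mul_assoc]
  have step1 : ∀ u v : F,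
      (A*B'*C'⁻¹) (-1) * ∑ w : F, (if m u * (m v * t) * m w = 1 then
          A u * ((B⁻¹*C) v * C⁻¹ (1 - v)) * ((A*C'⁻¹) w * (A*B'*C'⁻¹)⁻¹ (1 - w)) else 0)
        = (A u * ((B⁻¹*C) v * C⁻¹ (1 - v))) *
            (B' (1 - m u * (m v * t)) * (A⁻¹ * (B'⁻¹ * C')) (m u * (m v * t))) := by
    intro u v
    have hpull : ∑ w : F, (if m u * (m v * t) * m w = 1 then
          A u * ((B⁻¹*C) v * C⁻¹ (1 - v)) * ((A*C'⁻¹) w * (A*B'*C'⁻¹)⁻¹ (1 - w)) else 0)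
        = (A u * ((B⁻¹*C) v * C⁻¹ (1 - v))) * ∑ w : F, (if m u * (m v * t) * m w = 1 then
            ((A*C'⁻¹) w * (A*B'*C'⁻¹)⁻¹ (1 - w)) else 0) := by
      rw [Finset.mul_sum]
      refine Finset.sum_congr rfl fun w _ => ?_
      split <;> ring
    rw [hpull, mul_left_comm, w_elim, e1, e2]
  have hR : hyper3F2 A (B⁻¹*C) (A*C'⁻¹) C (A*B'*C'⁻¹) t = C (-1) * S := by
    rw [hyper_eq, mul_assoc]
    congr 1
    calc (A*B'*C'⁻¹) (-1) * ∑ u : F, ∑ v : F, ∑ w : F, (if m u * (m v * t) * m w = 1 then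
            A u * ((B⁻¹*C) v * C⁻¹ (1 - v)) * ((A*C'⁻¹) w * (A*B'*C'⁻¹)⁻¹ (1 - w)) else 0)
        = ∑ u : F, ∑ v : F, (A u * ((B⁻¹*C) v * C⁻¹ (1 - v))) *
            (B' (1 - m u * (m v * t)) * (A⁻¹ * (B'⁻¹ * C')) (m u * (m v * t))) := by
          rw [Finset.mul_sum]
          refine Finset.sum_congr rfl fun u _ => ?_
          rw [Finset.mul_sum]
          exact Finset.sum_congr rfl fun v _ => step1 u v
      _ = ∑ v : F, ∑ u : F, (A u * ((B⁻¹*C) v * C⁻¹ (1 - v))) *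
            (B' (1 - m u * (m v * t)) * (A⁻¹ * (B'⁻¹ * C')) (m u * (m v * t))) :=
          Finset.sum_comm
      _ = S := by
          rw [hS]
          refine Finset.sum_congr rfl fun v _ => ?_
          rcases eq_or_ne v 0 with rfl | hv0
          · simp [MulChar.map_zero]
          rcases eq_or_ne v 1 with rfl | hv1
          · simp [MulChar.map_zero]
          have hd : m v * t ≠ 0 := mul_ne_zero (m_ne_zero hv0 hv1) ht
          calc ∑ u : F, (A u * ((B⁻¹*C) v * C⁻¹ (1 - v))) *
                (B' (1 - m u * (m v * t)) * (A⁻¹ * (B'⁻¹ * C')) (m u * (m v * t)))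
              = ((B⁻¹*C) v * C⁻¹ (1 - v)) * ∑ u : F, A u *
                  (B' (1 - m u * (m v * t)) * (A⁻¹ * (B'⁻¹ * C')) (m u * (m v * t))) := by
                rw [Finset.mul_sum]
                exact Finset.sum_congr rfl fun u _ => by ring
            _ = ((B⁻¹*C) v * C⁻¹ (1 - v)) * ∑ b : F,
                  B' (1 - b) * (B'⁻¹ * C') b * A⁻¹ (b - m v * t) := by
                rw [u_elim A (B'⁻¹ * C') B' hd]
            _ = ∑ b : F, ((B⁻¹*C) v * C⁻¹ (1 - v)) *
                  (B' (1 - b) * ((B'⁻¹ * C') b * A⁻¹ (b - m v * t))) := by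
                rw [Finset.mul_sum]
                exact Finset.sum_congr rfl fun b _ => by ring
  -- ===================== L chain =====================
  have hfact : ∀ a b : F, (1 : F) - a*x - b*(1-x) = (1-x) * ((1-b) - (1-a)*t) := by
    intro a b
    rw [hts]
    field_simp
    ring
  have hone : (1 : MulChar F ℂ) (x*(1-x)) = 1 :=
    MulChar.one_apply ((mul_ne_zero hx0 hx1).isUnit)
  have hL : appellF2 A B B' C C' x (1-x)
      = (B*B'*C*C') (-1) * (A⁻¹ (1-x) * ((B*C) (-1) * S)) := by
    rw [appellF2, hone, one_mul, mul_assoc]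
    congr 1
    calc ∑ u : F, ∑ v : F, B u * B' v * (B⁻¹*C) (1-u) * (B'⁻¹*C') (1-v)
            * A⁻¹ (1 - u*x - v*(1-x))
        = ∑ a : F, ∑ b : F, (B⁻¹*C) a * B (1-a) *
            ((B'⁻¹*C') b * B' (1-b) * (A⁻¹ (1-x) * A⁻¹ (b - a*t))) := by
          rw [← sum_one_sub (fun a => ∑ b : F, (B⁻¹*C) a * B (1-a) *
            ((B'⁻¹*C') b * B' (1-b) * (A⁻¹ (1-x) * A⁻¹ (b - a*t))))]
          refine Finset.sum_congr rfl fun a _ => ?_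
          rw [← sum_one_sub (fun b => (B⁻¹*C) (1-a) * B (1-(1-a)) *
            ((B'⁻¹*C') b * B' (1-b) * (A⁻¹ (1-x) * A⁻¹ (b - (1-a)*t))))]
          refine Finset.sum_congr rfl fun b _ => ?_
          rw [hfact, map_mul, sub_sub_cancel, sub_sub_cancel]
          ring
      _ = A⁻¹ (1-x) * ∑ a : F, (B⁻¹*C) a * B (1-a) *
            (∑ b : F, (B'⁻¹*C') b * B' (1-b) * A⁻¹ (b - a*t)) := by
          rw [Finset.mul_sum]
          refine Finset.sum_congr rfl fun a _ => ?_
          conv_rhs => rw [Finset.mul_sum]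
          conv_rhs => rw [Finset.mul_sum]
          refine Finset.sum_congr rfl fun b _ => ?_
          ring
      _ = A⁻¹ (1-x) * ((B*C) (-1) * ∑ v : F, (B⁻¹*C) v * C⁻¹ (1-v) *
            (∑ b : F, (B'⁻¹*C') b * B' (1-b) * A⁻¹ (b - m v * t))) := by
          rw [a_reindex B C (fun a => ∑ b : F, (B'⁻¹*C') b * B' (1-b) * A⁻¹ (b - a*t))]
      _ = A⁻¹ (1-x) * ((B*C) (-1) * S) := by
          rw [hS]
          congr 1
          congr 1
          refine Finset.sum_congr rfl fun v _ => ?_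
          rw [Finset.mul_sum]
          refine Finset.sum_congr rfl fun b _ => ?_
          ring
  -- ===================== assembly =====================
  rw [hL, hR]
  simp only [MulChar.mul_apply]
  linear_combination (A⁻¹ (1-x) * S * B' (-1) * C (-1) * C (-1) * C' (-1)) * hsq B
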